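/- Let K be an abstract simplicial complex on a finite vertex set V and let d ≥ 1. Then K is the nerve of a family (F_v)_{v∈V} of convex sets in ℝ^d if and only if the suspension S(K) is the nerve of a family of convex sets in ℝ^{d+1} indexed by V ∪ {a,b}. Here 'K is the nerve of (F_v)_{v∈V}' means: for every nonempty S ⊆ V, ⋂_{v∈S} F_v ≠ ∅ if and only if S is a face of K. -/

import Mathlib

/-- The faces of the suspension `S(K)` of a simplicial complex `K` on vertex set `V`, with the
two new apex vertices `a = Sum.inr true` and `b = Sum.inr false`: they are the faces of `K`,
the singletons `{a}` and `{b}`, and `f ∪ {a}`, `f ∪ {b}` for every face `f` of `K`. -/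
def suspensionFaces {V : Type*} [DecidableEq V] (K : Set (Finset V)) :
    Set (Finset (V ⊕ Bool)) :=
  {T | (∃ f ∈ K, T = f.image Sum.inl) ∨
       (∃ b : Bool, T = {Sum.inr b}) ∨
       (∃ f ∈ K, ∃ b : Bool, T = insert (Sum.inr b) (f.image Sum.inl))}


open Set Pointwise

section helpers
variable {V : Type*} [DecidableEq V] {K : Set (Finset V)}

lemma susp_image_mem {S : Finset V} (hS : S.Nonempty) :
    S.image Sum.inl ∈ suspensionFaces K ↔ S ∈ K := by
  constructor
  · rintro (⟨f, hf, h⟩ | ⟨b, h⟩ | ⟨f, hf, b, h⟩)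
    · rwa [Finset.image_injective Sum.inl_injective h]
    · obtain ⟨v, hv⟩ := hS
      have : (Sum.inl v : V ⊕ Bool) ∈ S.image Sum.inl := Finset.mem_image_of_mem _ hv
      rw [h] at this; simp at this
    · have : Sum.inr b ∈ S.image Sum.inl := by rw [h]; exact Finset.mem_insert_self _ _
      simp at this
  · intro h; exact Or.inl ⟨S, h, rfl⟩

lemma susp_insert_mem {S : Finset V} (hS : S.Nonempty) (b : Bool) :
    insert (Sum.inr b) (S.image Sum.inl) ∈ suspensionFaces K ↔ S ∈ K := by
  constructor
  · rintro (⟨f, hf, h⟩ | ⟨b', h⟩ | ⟨f, hf, b', h⟩)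
    · have : Sum.inr b ∈ f.image Sum.inl := by rw [← h]; exact Finset.mem_insert_self _ _
      simp at this
    · obtain ⟨v, hv⟩ := hS
      have : Sum.inl v ∈ ({Sum.inr b'} : Finset (V ⊕ Bool)) := by
        rw [← h]; exact Finset.mem_insert_of_mem (Finset.mem_image_of_mem _ hv)
      simp at this
    · have hSf : S = f := by
        ext v
        have h1 : ((Sum.inl v : V ⊕ Bool) ∈ insert (Sum.inr b) (S.image Sum.inl)) ↔
            ((Sum.inl v : V ⊕ Bool) ∈ insert (Sum.inr b') (f.image Sum.inl)) := by rw [h]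
        simpa using h1
      rw [hSf]; exact hf
  · intro h; exact Or.inr (Or.inr ⟨S, h, b, rfl⟩)

end helpers

def projL (d : ℕ) : EuclideanSpace ℝ (Fin (d+1)) →ₗ[ℝ] EuclideanSpace ℝ (Fin d) where
  toFun x := WithLp.toLp 2 (fun i : Fin d => x i.castSucc)
  map_add' _ _ := rfl
  map_smul' _ _ := rfl

def lastL (d : ℕ) : EuclideanSpace ℝ (Fin (d+1)) →ₗ[ℝ] ℝ where
  toFun x := x (Fin.last d)
  map_add' _ _ := rfl
  map_smul' _ _ := rfl

def extPt {d : ℕ} (y : EuclideanSpace ℝ (Fin d)) (r : ℝ) : EuclideanSpace ℝ (Fin (d+1)) :=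
  WithLp.toLp 2 (fun i => Fin.lastCases (motive := fun _ => ℝ) r (fun j => y j) i)

@[simp] lemma projL_extPt {d : ℕ} (y : EuclideanSpace ℝ (Fin d)) (r : ℝ) :
    projL d (extPt y r) = y := by
  ext i; show Fin.lastCases (motive := fun _ => ℝ) r (fun j => y j) i.castSucc = y i; simp

@[simp] lemma lastL_extPt {d : ℕ} (y : EuclideanSpace ℝ (Fin d)) (r : ℝ) :
    lastL d (extPt y r) = r := by
  show Fin.lastCases (motive := fun _ => ℝ) r (fun j => y j) (Fin.last d) = r; simp

lemma cyl_nonempty {d : ℕ} {V : Type*} (F : V → Set (EuclideanSpace ℝ (Fin d)))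
    (S : Finset V) (r : ℝ) :
    ((⋂ v ∈ S, (projL d ⁻¹' (F v))) ∩ (lastL d ⁻¹' {r})).Nonempty ↔
      (⋂ v ∈ S, F v).Nonempty := by
  constructor
  · rintro ⟨x, hx1, -⟩
    exact ⟨projL d x, Set.mem_iInter₂.mpr fun v hv => Set.mem_iInter₂.mp hx1 v hv⟩
  · rintro ⟨y, hy⟩
    refine ⟨extPt y r, Set.mem_iInter₂.mpr fun v hv => ?_, by simp⟩
    simp only [mem_preimage, projL_extPt]
    exact Set.mem_iInter₂.mp hy v hv

lemma cyl_nonempty' {d : ℕ} {V : Type*} (F : V → Set (EuclideanSpace ℝ (Fin d)))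
    (S : Finset V) :
    (⋂ v ∈ S, (projL d ⁻¹' (F v))).Nonempty ↔ (⋂ v ∈ S, F v).Nonempty := by
  constructor
  · rintro ⟨x, hx1⟩
    exact ⟨projL d x, Set.mem_iInter₂.mpr fun v hv => Set.mem_iInter₂.mp hx1 v hv⟩
  · rintro ⟨y, hy⟩
    refine ⟨extPt y 0, Set.mem_iInter₂.mpr fun v hv => ?_⟩
    simp only [mem_preimage, projL_extPt]
    exact Set.mem_iInter₂.mp hy v hv

lemma biInter_image_inl {V : Type*} [DecidableEq V] {α : Type*}
    (S : Finset V) (G : V ⊕ Bool → Set α) :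
    (⋂ x ∈ S.image Sum.inl, G x) = ⋂ v ∈ S, G (Sum.inl v) := by
  ext x
  simp only [Set.mem_iInter₂, Finset.mem_image]
  constructor
  · intro h v hv; exact h _ ⟨v, hv, rfl⟩
  · rintro h y ⟨v, hv, rfl⟩; exact h v hv

lemma T_decomp {V : Type*} [DecidableEq V] (T : Finset (V ⊕ Bool)) (hT : T.Nonempty) :
    (Sum.inr true ∈ T ∧ Sum.inr false ∈ T) ∨
    (∃ b, Sum.inr b ∈ T ∧ T = {Sum.inr b}) ∨
    (∃ b, Sum.inr b ∈ T ∧ (T.preimage Sum.inl Sum.inl_injective.injOn).Nonempty ∧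
      T = insert (Sum.inr b) ((T.preimage Sum.inl Sum.inl_injective.injOn).image Sum.inl)) ∨
    ((T.preimage Sum.inl Sum.inl_injective.injOn).Nonempty ∧
      T = (T.preimage Sum.inl Sum.inl_injective.injOn).image Sum.inl) := by
  classical
  set S := T.preimage Sum.inl Sum.inl_injective.injOn with hS
  have hmemS : ∀ v : V, v ∈ S ↔ Sum.inl v ∈ T := fun v => Finset.mem_preimage
  by_cases htt : Sum.inr true ∈ T <;> by_cases htf : Sum.inr false ∈ T
  · exact Or.inl ⟨htt, htf⟩
  all_goals by_cases hSne : S.Nonempty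
  -- inr true only, S nonempty
  · refine Or.inr (Or.inr (Or.inl ⟨true, htt, hSne, ?_⟩))
    ext x
    simp only [Finset.mem_insert, Finset.mem_image]
    constructor
    · rintro hx
      rcases x with v | b
      · exact Or.inr ⟨v, (hmemS v).mpr hx, rfl⟩
      · cases b
        · exact absurd hx htf
        · exact Or.inl rfl
    · rintro (rfl | ⟨v, hv, rfl⟩)
      · exact htt
      · exact (hmemS v).mp hv
  -- inr true only, S empty
  · refine Or.inr (Or.inl ⟨true, htt, ?_⟩)
    apply Finset.eq_singleton_iff_unique_mem.mpr ⟨htt, ?_⟩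
    rintro (v | b) hx
    · exact absurd ⟨v, (hmemS v).mpr hx⟩ hSne
    · cases b
      · exact absurd hx htf
      · rfl
  -- inr false only, S nonempty
  · refine Or.inr (Or.inr (Or.inl ⟨false, htf, hSne, ?_⟩))
    ext x
    simp only [Finset.mem_insert, Finset.mem_image]
    constructor
    · rintro hx
      rcases x with v | b
      · exact Or.inr ⟨v, (hmemS v).mpr hx, rfl⟩
      · cases b
        · exact Or.inl rfl
        · exact absurd hx htt
    · rintro (rfl | ⟨v, hv, rfl⟩)
      · exact htf
      · exact (hmemS v).mp hv
  -- inr false only, S empty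
  · refine Or.inr (Or.inl ⟨false, htf, ?_⟩)
    apply Finset.eq_singleton_iff_unique_mem.mpr ⟨htf, ?_⟩
    rintro (v | b) hx
    · exact absurd ⟨v, (hmemS v).mpr hx⟩ hSne
    · cases b
      · rfl
      · exact absurd hx htt
  -- no apex, S nonempty
  · refine Or.inr (Or.inr (Or.inr ⟨hSne, ?_⟩))
    ext x
    simp only [Finset.mem_image]
    constructor
    · rintro hx
      rcases x with v | b
      · exact ⟨v, (hmemS v).mpr hx, rfl⟩
      · cases b
        · exact absurd hx htf
        · exact absurd hx htt
    · rintro ⟨v, hv, rfl⟩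
      exact (hmemS v).mp hv
  -- no apex, S empty: impossible
  · exfalso
    obtain ⟨x, hx⟩ := hT
    rcases x with v | b
    · exact hSne ⟨v, (hmemS v).mpr hx⟩
    · cases b
      · exact htf hx
      · exact htt hx

theorem fwd (d : ℕ)
    (V : Type*) [Fintype V] [DecidableEq V]
    (K : Set (Finset V))
    (hF : ∃ F : V → Set (EuclideanSpace ℝ (Fin d)),
        (∀ v, Convex ℝ (F v)) ∧
        (∀ S : Finset V, S.Nonempty → ((⋂ v ∈ S, F v).Nonempty ↔ S ∈ K))) :
    (∃ F' : V ⊕ Bool → Set (EuclideanSpace ℝ (Fin (d + 1))),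
        (∀ x, Convex ℝ (F' x)) ∧
        (∀ T : Finset (V ⊕ Bool), T.Nonempty →
          ((⋂ x ∈ T, F' x).Nonempty ↔ T ∈ suspensionFaces K))) := by
  classical
  obtain ⟨F, hconv, hF⟩ := hF
  set F' : V ⊕ Bool → Set (EuclideanSpace ℝ (Fin (d + 1))) :=
    Sum.elim (fun v => projL d ⁻¹' (F v))
      (fun b => (lastL d) ⁻¹' {if b then (1:ℝ) else -1}) with hF'def
  have hconv' : ∀ x, Convex ℝ (F' x) := by
    rintro (v | b)
    · exact (hconv v).linear_preimage _
    · exact (convex_singleton _).linear_preimage _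
  refine ⟨F', hconv', ?_⟩
  intro T hT
  rcases T_decomp T hT with ⟨htt, htf⟩ | ⟨b, hb, rfl⟩ | ⟨b, hb, hSne, hTeq⟩ | ⟨hSne, hTeq⟩
  · -- both apexes: both sides false
    constructor
    · rintro ⟨x, hx⟩
      have h1 : x ∈ F' (Sum.inr true) := Set.mem_iInter₂.mp hx _ htt
      have h2 : x ∈ F' (Sum.inr false) := Set.mem_iInter₂.mp hx _ htf
      simp only [hF'def, Sum.elim_inr, mem_preimage, mem_singleton_iff] at h1 h2
      norm_num at h1 h2
      rw [h1] at h2; norm_num at h2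
    · rintro (⟨f, hf, h⟩ | ⟨b, h⟩ | ⟨f, hf, b, h⟩)
      · rw [h] at htt; simp at htt
      · rw [h] at htt htf; cases b <;> simp_all
      · rw [h] at htt htf
        cases b <;> simp only [Finset.mem_insert] at htt htf <;> simp_all
  · -- singleton apex: both sides true
    rw [Finset.set_biInter_singleton]
    constructor
    · intro _
      exact Or.inr (Or.inl ⟨b, rfl⟩)
    · intro _
      exact ⟨extPt 0 (if b then 1 else -1), by simp [hF'def]⟩
  · -- apex b plus nonempty S
    set S := T.preimage Sum.inl Sum.inl_injective.injOn with hS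
    rw [hTeq, Finset.set_biInter_insert, biInter_image_inl]
    have hiff : (F' (Sum.inr b) ∩ ⋂ v ∈ S, F' (Sum.inl v)).Nonempty ↔
        (⋂ v ∈ S, F v).Nonempty := by
      rw [Set.inter_comm]
      simpa only [hF'def, Sum.elim_inl, Sum.elim_inr] using
        cyl_nonempty F S (if b then (1:ℝ) else -1)
    rw [hiff, hF S hSne]
    exact (susp_insert_mem hSne b).symm
  · -- no apex, nonempty S
    set S := T.preimage Sum.inl Sum.inl_injective.injOn with hS
    rw [hTeq, biInter_image_inl]
    have hiff : (⋂ v ∈ S, F' (Sum.inl v)).Nonempty ↔ (⋂ v ∈ S, F v).Nonempty := by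
      simpa only [hF'def, Sum.elim_inl] using cyl_nonempty' F S
    rw [hiff, hF S hSne]
    exact (susp_image_mem hSne).symm

theorem sep_aux {E : Type*} [NormedAddCommGroup E] [NormedSpace ℝ E] [FiniteDimensional ℝ E]
    {C : Set E} (hC : Convex ℝ C) (hne : C.Nonempty) (h0 : (0:E) ∉ C) :
    ∃ f : E →L[ℝ] ℝ, f ≠ 0 ∧ ∀ x ∈ C, 0 ≤ f x := by
  by_cases hint : (interior C).Nonempty
  · obtain ⟨b, hb⟩ := hint
    obtain ⟨f, hf⟩ := geometric_hahn_banach_point_open (x := (0:E)) hC.interior isOpen_interior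
      (fun h => h0 (interior_subset h))
    have hfb : 0 < f b := by simpa using hf b hb
    refine ⟨f, ?_, ?_⟩
    · intro h; rw [h] at hfb; simp at hfb
    · intro x hx
      by_contra hfx
      push_neg at hfx
      set t : ℝ := (-f x) / (2*(f b - f x)) with ht
      have hd : 0 < f b - f x := by linarith
      have h1 : 0 < t := div_pos (by linarith) (by linarith)
      have h1' : 0 ≤ 1 - t := by
        rw [ht, sub_nonneg, div_le_one (by positivity)]
        nlinarith
      have hmem : t • b + (1-t) • x ∈ interior C :=
        hC.combo_interior_self_mem_interior hb hx h1 h1' (by ring)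
      have h2 := hf _ hmem
      have h3 : f (t • b + (1-t) • x) = t * f b + (1-t) * f x := by
        simp [map_add, map_smul]
      rw [h3] at h2
      simp only [map_zero] at h2
      have : t * (f b - f x) = - f x / 2 := by
        rw [ht]; field_simp
      nlinarith
  · -- empty interior: C lies in a proper affine subspace
    have hspan : affineSpan ℝ C ≠ ⊤ := by
      intro h
      exact hint (hC.interior_nonempty_iff_affineSpan_eq_top.mpr h)
    obtain ⟨c0, hc0⟩ := hne
    have hdir : (affineSpan ℝ C).direction < ⊤ := by
      rcases lt_or_eq_of_le (le_top : (affineSpan ℝ C).direction ≤ ⊤) with h | h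
      · exact h
      · exact absurd (((affineSpan ℝ C).direction_eq_top_iff_of_nonempty
          ((affineSpan_nonempty (k := ℝ)).mpr ⟨c0, hc0⟩)).mp h) hspan
    obtain ⟨g, hg0, hgker⟩ := Submodule.exists_dual_map_eq_bot_of_lt_top hdir inferInstance
    have hgC : ∀ x ∈ C, g x = g c0 := by
      intro x hx
      have hmem : x - c0 ∈ (affineSpan ℝ C).direction := by
        simpa using AffineSubspace.vsub_mem_direction (subset_affineSpan ℝ C hx)
          (subset_affineSpan ℝ C hc0)
      have : g (x - c0) = 0 := by
        have := hgker ▸ Submodule.mem_map_of_mem (f := g) hmem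
        simpa using this
      have := this
      rw [map_sub] at this
      linarith
    set g' : E →L[ℝ] ℝ := LinearMap.toContinuousLinearMap g with hg'
    have hg'0 : g' ≠ 0 := by
      intro h
      apply hg0
      have : (g' : E →ₗ[ℝ] ℝ) = 0 := by rw [h]; rfl
      simpa [hg'] using this
    rcases le_or_gt 0 (g c0) with h | h
    · exact ⟨g', hg'0, fun x hx => by simpa [hg', hgC x hx] using h⟩
    · refine ⟨-g', by simpa using hg'0, fun x hx => ?_⟩
      have : g' x = g x := rfl
      simp only [ContinuousLinearMap.neg_apply, this, hgC x hx]
      linarith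

lemma pair_not_mem {V : Type*} [DecidableEq V] (K : Set (Finset V)) :
    ({Sum.inr true, Sum.inr false} : Finset (V ⊕ Bool)) ∉ suspensionFaces K := by
  rintro (⟨f, hf, h⟩ | ⟨b, h⟩ | ⟨f, hf, b, h⟩)
  · have : (Sum.inr true : V ⊕ Bool) ∈ f.image Sum.inl := by rw [← h]; simp
    simp at this
  · have h1 : (Sum.inr true : V ⊕ Bool) ∈ ({Sum.inr b} : Finset (V ⊕ Bool)) := by
      rw [← h]; simp
    have h2 : (Sum.inr false : V ⊕ Bool) ∈ ({Sum.inr b} : Finset (V ⊕ Bool)) := by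
      rw [← h]; simp
    simp at h1 h2; rw [h1] at h2; simp at h2
  · have h1 : (Sum.inr true : V ⊕ Bool) ∈ insert (Sum.inr b) (f.image Sum.inl) := by
      rw [← h]; simp
    have h2 : (Sum.inr false : V ⊕ Bool) ∈ insert (Sum.inr b) (f.image Sum.inl) := by
      rw [← h]; simp
    simp only [Finset.mem_insert, Finset.mem_image] at h1 h2
    rcases h1 with h1 | ⟨v, _, hv⟩
    · rcases h2 with h2 | ⟨w, _, hw⟩
      · rw [Sum.inr.injEq] at h1 h2; rw [← h1] at h2; simp at h2
      · cases hw
    · cases hv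

theorem bwd (d : ℕ)
    (V : Type*) [Fintype V] [DecidableEq V]
    (K : Set (Finset V))
    (h : ∃ F' : V ⊕ Bool → Set (EuclideanSpace ℝ (Fin (d + 1))),
        (∀ x, Convex ℝ (F' x)) ∧
        (∀ T : Finset (V ⊕ Bool), T.Nonempty →
          ((⋂ x ∈ T, F' x).Nonempty ↔ T ∈ suspensionFaces K))) :
    (∃ F : V → Set (EuclideanSpace ℝ (Fin d)),
        (∀ v, Convex ℝ (F v)) ∧
        (∀ S : Finset V, S.Nonempty → ((⋂ v ∈ S, F v).Nonempty ↔ S ∈ K))) := by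
  classical
  obtain ⟨F', hconv', hF'⟩ := h
  set A := F' (Sum.inr true) with hAdef
  set B := F' (Sum.inr false) with hBdef
  have hA : A.Nonempty := by
    have := (hF' {Sum.inr true} ⟨_, Finset.mem_singleton_self _⟩).mpr
      (Or.inr (Or.inl ⟨true, rfl⟩))
    simpa [Finset.set_biInter_singleton] using this
  have hB : B.Nonempty := by
    have := (hF' {Sum.inr false} ⟨_, Finset.mem_singleton_self _⟩).mpr
      (Or.inr (Or.inl ⟨false, rfl⟩))
    simpa [Finset.set_biInter_singleton] using this
  have hdisj : ∀ x, x ∈ A → x ∈ B → False := by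
    intro x hx1 hx2
    have hTne : ({Sum.inr true, Sum.inr false} : Finset (V ⊕ Bool)).Nonempty := ⟨Sum.inr true, by simp⟩
    have hmem : (⋂ y ∈ ({Sum.inr true, Sum.inr false} : Finset (V ⊕ Bool)), F' y).Nonempty := by
      refine ⟨x, Set.mem_iInter₂.mpr ?_⟩
      intro y hy
      rcases Finset.mem_insert.mp hy with rfl | hy
      · exact hx1
      · rw [Finset.mem_singleton.mp hy]; exact hx2
    exact pair_not_mem K ((hF' _ hTne).mp hmem)
  -- separation
  have hCconv : Convex ℝ (A - B) := (hconv' _).sub (hconv' _)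
  obtain ⟨a0, ha0⟩ := hA
  obtain ⟨b0, hb0⟩ := hB
  have h0 : (0 : EuclideanSpace ℝ (Fin (d+1))) ∉ A - B := by
    rintro ⟨a, ha, b, hb, hab⟩
    rw [sub_eq_zero] at hab
    exact hdisj a ha (hab ▸ hb)
  obtain ⟨f, hf0, hfpos⟩ := sep_aux hCconv ⟨a0 - b0, Set.sub_mem_sub ha0 hb0⟩ h0
  have hford : ∀ a ∈ A, ∀ b ∈ B, f b ≤ f a := by
    intro a ha b hb
    have := hfpos (a - b) (Set.sub_mem_sub ha hb)
    rw [map_sub] at this; linarith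
  set c : ℝ := sInf (f '' A) with hc
  have hbdd : BddBelow (f '' A) := by
    refine ⟨f b0, ?_⟩
    rintro y ⟨a, ha, rfl⟩
    exact hford a ha b0 hb0
  have hcA : ∀ a ∈ A, c ≤ f a := fun a ha => csInf_le hbdd ⟨a, ha, rfl⟩
  have hcB : ∀ b ∈ B, f b ≤ c := by
    intro b hb
    refine le_csInf ⟨f a0, a0, ha0, rfl⟩ ?_
    rintro y ⟨a, ha, rfl⟩
    exact hford a ha b hb
  -- surjectivity of f
  obtain ⟨z, hz⟩ : ∃ z, f z ≠ 0 := by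
    by_contra hcon
    push_neg at hcon
    exact hf0 (by ext x; simp [hcon x])
  set x0 : EuclideanSpace ℝ (Fin (d+1)) := (c / f z) • z with hx0def
  have hx0 : f x0 = c := by
    rw [hx0def, map_smul, smul_eq_mul]
    field_simp
  -- kernel
  set fl : EuclideanSpace ℝ (Fin (d+1)) →ₗ[ℝ] ℝ := (f : _ →L[ℝ] ℝ).toLinearMap with hfl
  have hflf : ∀ x, fl x = f x := fun _ => rfl
  have hrange : LinearMap.range fl = ⊤ := by
    rw [LinearMap.range_eq_top]
    intro r
    exact ⟨(r / f z) • z, by rw [hflf, map_smul, smul_eq_mul]; field_simp⟩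
  have hker : Module.finrank ℝ (LinearMap.ker fl) = d := by
    have h1 := LinearMap.finrank_range_add_finrank_ker fl
    rw [hrange, finrank_top, finrank_euclideanSpace_fin, Module.finrank_self] at h1
    omega
  set W := LinearMap.ker fl with hW
  have hWd : Module.finrank ℝ (EuclideanSpace ℝ (Fin d)) = Module.finrank ℝ W := by
    rw [finrank_euclideanSpace_fin, hker]
  obtain ⟨ψ, -⟩ : ∃ _ : EuclideanSpace ℝ (Fin d) ≃ₗ[ℝ] W, True :=
    ⟨LinearEquiv.ofFinrankEq _ _ hWd, trivial⟩
  set φ : EuclideanSpace ℝ (Fin d) → EuclideanSpace ℝ (Fin (d+1)) :=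
    fun y => x0 + (ψ y : EuclideanSpace ℝ (Fin (d+1))) with hφ
  have hφf : ∀ y, f (φ y) = c := by
    intro y
    have hker' : fl ((ψ y : EuclideanSpace ℝ (Fin (d+1)))) = 0 := (ψ y).2
    rw [hφ]
    simp only [map_add, hx0]
    rw [← hflf, hker', add_zero]
  have hφcombo : ∀ (a b : ℝ), a + b = 1 → ∀ y1 y2,
      φ (a • y1 + b • y2) = a • φ y1 + b • φ y2 := by
    intro a b hab y1 y2
    simp only [hφ, map_add, map_smul, Submodule.coe_add, Submodule.coe_smul]
    rw [smul_add, smul_add]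
    have hx : a • x0 + b • x0 = x0 := by rw [← add_smul, hab, one_smul]
    rw [add_add_add_comm, hx]
  have hsurjH : ∀ x, f x = c → ∃ y, φ y = x := by
    intro x hx
    refine ⟨ψ.symm ⟨x - x0, ?_⟩, ?_⟩
    · rw [LinearMap.mem_ker, map_sub, hflf, hflf, hx, hx0, sub_self]
    · rw [hφ]
      simp only [LinearEquiv.apply_symm_apply]
      abel
  refine ⟨fun v => φ ⁻¹' (F' (Sum.inl v)), ?_, ?_⟩
  · intro v y1 h1 y2 h2 a b ha hb hab
    have : φ (a • y1 + b • y2) ∈ F' (Sum.inl v) := by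
      rw [hφcombo a b hab]
      exact hconv' _ h1 h2 ha hb hab
    exact this
  · intro S hSne
    constructor
    · rintro ⟨y, hy⟩
      have hx : φ y ∈ ⋂ x ∈ S.image Sum.inl, F' x := by
        rw [biInter_image_inl]
        exact Set.mem_iInter₂.mpr fun v hv => Set.mem_iInter₂.mp hy v hv
      have := (hF' (S.image Sum.inl) (hSne.image _)).mp ⟨φ y, hx⟩
      exact (susp_image_mem hSne).mp this
    · intro hSK
      obtain ⟨p, hp⟩ := (hF' (insert (Sum.inr true) (S.image Sum.inl))
        ⟨_, Finset.mem_insert_self _ _⟩).mpr ((susp_insert_mem hSne true).mpr hSK)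
      obtain ⟨q, hq⟩ := (hF' (insert (Sum.inr false) (S.image Sum.inl))
        ⟨_, Finset.mem_insert_self _ _⟩).mpr ((susp_insert_mem hSne false).mpr hSK)
      rw [Finset.set_biInter_insert, biInter_image_inl] at hp hq
      have hpA : p ∈ A := hp.1
      have hqB : q ∈ B := hq.1
      have hpS : ∀ v ∈ S, p ∈ F' (Sum.inl v) := fun v hv => Set.mem_iInter₂.mp hp.2 v hv
      have hqS : ∀ v ∈ S, q ∈ F' (Sum.inl v) := fun v hv => Set.mem_iInter₂.mp hq.2 v hv
      have hpc : c ≤ f p := hcA p hpA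
      have hqc : f q ≤ c := hcB q hqB
      -- find point z on segment [q,p] with f z = c
      obtain ⟨z, hzc, hzS⟩ : ∃ z, f z = c ∧ ∀ v ∈ S, z ∈ F' (Sum.inl v) := by
        by_cases heq : f p = f q
        · exact ⟨p, le_antisymm (heq ▸ hqc) hpc, hpS⟩
        · have hlt : f q < f p := lt_of_le_of_ne (le_trans hqc hpc) (Ne.symm heq)
          set t : ℝ := (c - f q) / (f p - f q) with htdef
          have hden : (0:ℝ) < f p - f q := by linarith
          have ht0 : 0 ≤ t := div_nonneg (by linarith) hden.le
          have ht1 : t ≤ 1 := by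
            rw [htdef, div_le_one hden]; linarith
          refine ⟨t • p + (1 - t) • q, ?_, ?_⟩
          · have key : t * (f p - f q) = c - f q := div_mul_cancel₀ _ hden.ne'
            simp only [map_add, map_smul, smul_eq_mul]
            linarith [key]
          · intro v hv
            exact hconv' (Sum.inl v) (hpS v hv) (hqS v hv) ht0 (by linarith) (by ring)
      obtain ⟨y, hy⟩ := hsurjH z hzc
      exact ⟨y, Set.mem_iInter₂.mpr fun v hv => by
        show φ y ∈ F' (Sum.inl v); rw [hy]; exact hzS v hv⟩

/-- **Suspension lemma for nerves of convex sets.** Let `K` be an abstract simplicial complex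
on a finite vertex set `V` and let `d ≥ 1`. Then `K` is the nerve of a family of convex sets
in `ℝ^d` if and only if the suspension `S(K)` is the nerve of a family of convex sets in
`ℝ^(d+1)` indexed by `V ⊕ {a, b}`. -/
theorem nerve_suspension_iff (d : ℕ) (hd : 1 ≤ d)
    (V : Type*) [Fintype V] [DecidableEq V]
    (K : Set (Finset V))
    (hKne : ∀ s ∈ K, s.Nonempty)
    (hKvert : ∀ v : V, ({v} : Finset V) ∈ K)
    (hKdown : ∀ s ∈ K, ∀ t ⊆ s, t.Nonempty → t ∈ K) :
    (∃ F : V → Set (EuclideanSpace ℝ (Fin d)),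
        (∀ v, Convex ℝ (F v)) ∧
        (∀ S : Finset V, S.Nonempty →
          ((⋂ v ∈ S, F v).Nonempty ↔ S ∈ K))) ↔
    (∃ F' : V ⊕ Bool → Set (EuclideanSpace ℝ (Fin (d + 1))),
        (∀ x, Convex ℝ (F' x)) ∧
        (∀ T : Finset (V ⊕ Bool), T.Nonempty →
          ((⋂ x ∈ T, F' x).Nonempty ↔ T ∈ suspensionFaces K))) := by
  constructor
  · intro h
    exact fwd d V K h
  · intro h
    exact bwd d V K h
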